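/- With surrogate valuation v̄(a,θ) = θ·U(a) where U is strictly increasing with U(0)=0, for every θ in the ordered set with θ₁ = θ₂ = 1, the Clarke surplus satisfies p_S(θ) ≥ p_S(e₂) = 2U(1) − 2U(1/2) > 0, where e₂ = (1,1,0,…,0). -/

import Mathlib

lemma sum_if_two {n : ℕ} (hn : 2 ≤ n) (g : Fin n → ℝ) :
    ∑ i : Fin n, (if (i:ℕ) < 2 then g i else 0) = g ⟨0, by linarith⟩ + g ⟨1, by linarith⟩ := by
  rw [← Finset.sum_filter]
  have hset : Finset.univ.filter (fun i : Fin n => (i:ℕ) < 2)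
      = {⟨0, by linarith⟩, ⟨1, by linarith⟩} := by
    ext i
    simp [Fin.ext_iff]
    omega
  rw [hset, Finset.sum_insert (by simp [Fin.ext_iff]), Finset.sum_singleton]

lemma pair_ub {n : ℕ} (hn : 2 ≤ n) (U : ℝ → ℝ)
    (hUmono : StrictMonoOn U (Set.Icc 0 1))
    (hUconc : StrictConcaveOn ℝ (Set.Icc (0:ℝ) 1) U)
    (a : Fin n → ℝ) (ha : ∀ i, 0 ≤ a i) (hs : ∑ i, a i ≤ 1) :
    U (a ⟨0, by linarith⟩) + U (a ⟨1, by linarith⟩) ≤ 2 * U (1/2) := by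
  set i0 : Fin n := ⟨0, by linarith⟩
  set i1 : Fin n := ⟨1, by linarith⟩
  have hne : i0 ≠ i1 := by simp [i0, i1, Fin.ext_iff]
  have hxy : a i0 + a i1 ≤ 1 := by
    have : a i0 + a i1 = ∑ i ∈ ({i0, i1} : Finset (Fin n)), a i := by
      rw [Finset.sum_pair hne]
    rw [this]
    exact le_trans (Finset.sum_le_sum_of_subset_of_nonneg (Finset.subset_univ _)
      (fun i _ _ => ha i)) hs
  have hx : a i0 ∈ Set.Icc (0:ℝ) 1 := ⟨ha i0, by linarith [ha i1]⟩
  have hy : a i1 ∈ Set.Icc (0:ℝ) 1 := ⟨ha i1, by linarith [ha i0]⟩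
  have hconc := hUconc.concaveOn.2 hx hy (by norm_num : (0:ℝ) ≤ 1/2)
    (by norm_num : (0:ℝ) ≤ 1/2) (by norm_num)
  simp only [smul_eq_mul] at hconc
  have hmid : (1/2) * a i0 + (1/2) * a i1 ∈ Set.Icc (0:ℝ) 1 := by
    constructor <;> linarith [ha i0, ha i1]
  have hmono : U ((1/2) * a i0 + (1/2) * a i1) ≤ U (1/2) :=
    hUmono.monotoneOn hmid (by norm_num) (by linarith)
  linarith

/-- with v̄(a,θ) = θ·U(a), for every ordered θ with θ₁ = θ₂ = 1,
the Clarke surplus satisfies p_S(θ) ≥ p_S(e₂) = 2U(1) − 2U(1/2) > 0. -/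
theorem pS_lower_bound {n : ℕ} (hn : 2 ≤ n) (U : ℝ → ℝ)
    (hUmono : StrictMonoOn U (Set.Icc 0 1))
    (hUconc : StrictConcaveOn ℝ (Set.Icc (0:ℝ) 1) U)
    (hU0 : U 0 = 0)
    (σS : (Fin n → ℝ) → ℝ)
    (hσ : ∀ θ : Fin n → ℝ, (∀ i, 0 ≤ θ i) →
      IsGreatest {w | ∃ a : Fin n → ℝ, (∀ i, 0 ≤ a i) ∧ (∑ i, a i) ≤ 1 ∧
        w = ∑ i, θ i * U (a i)} (σS θ))
    (σm : Fin n → (Fin n → ℝ) → ℝ)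
    (hσm : ∀ (i : Fin n) (θ : Fin n → ℝ), (∀ j, 0 ≤ θ j) →
      IsGreatest {w | ∃ a : Fin n → ℝ, (∀ j, 0 ≤ a j) ∧ (∑ j, a j) ≤ 1 ∧
        w = ∑ j ∈ Finset.univ.erase i, θ j * U (a j)} (σm i θ))
    (pS : (Fin n → ℝ) → ℝ)
    (hpS : ∀ θ, pS θ = ∑ i, σm i θ - ((n : ℝ) - 1) * σS θ)
    (hpSmono : ∀ θ θ' : Fin n → ℝ, (∀ i, 0 ≤ θ i) → (∀ i, θ i ≤ θ' i) → pS θ ≤ pS θ') :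
    (pS (fun i => if (i : ℕ) < 2 then 1 else 0) = 2 * U 1 - 2 * U (1/2) ∧
      0 < pS (fun i => if (i : ℕ) < 2 then 1 else 0)) ∧
    ∀ θ : Fin n → ℝ, (∀ i, 0 ≤ θ i) → (∀ i j : Fin n, i ≤ j → θ j ≤ θ i) →
      θ ⟨0, by omega⟩ = 1 → θ ⟨1, by omega⟩ = 1 →
      pS (fun i => if (i : ℕ) < 2 then 1 else 0) ≤ pS θ := by
  set e : Fin n → ℝ := (fun i => if (i : ℕ) < 2 then 1 else 0) with he
  set i0 : Fin n := ⟨0, by omega⟩ with hi0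
  set i1 : Fin n := ⟨1, by omega⟩ with hi1
  have hne : i0 ≠ i1 := by simp [hi0, hi1, Fin.ext_iff]
  have henneg : ∀ i, 0 ≤ e i := by
    intro i; by_cases h : (i:ℕ) < 2 <;> simp only [he, h, if_true, if_false] <;> norm_num
  have hei0 : e i0 = 1 := by simp [he, hi0]
  have hei1 : e i1 = 1 := by simp [he, hi1]
  -- full sum rewrite
  have hfull : ∀ a : Fin n → ℝ, ∑ i, e i * U (a i) = U (a i0) + U (a i1) := by
    intro a
    simp only [he, ite_mul, one_mul, zero_mul]
    exact sum_if_two hn _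
  -- the half-split allocation
  set ah : Fin n → ℝ := (fun i => if (i : ℕ) < 2 then 1/2 else 0) with hah
  have hahn : ∀ i, 0 ≤ ah i := by
    intro i; by_cases h : (i:ℕ) < 2 <;> simp only [hah, h, if_true, if_false] <;> norm_num
  have hahs : ∑ i, ah i ≤ 1 := by
    have := sum_if_two hn (fun _ : Fin n => (1/2 : ℝ))
    simp only [hah]
    rw [this]; norm_num
  have hahi0 : ah i0 = 1/2 := by simp [hah, hi0]
  have hahi1 : ah i1 = 1/2 := by simp [hah, hi1]
  -- σS at e
  have hσSe : σS e = 2 * U (1/2) := by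
    refine (hσ e henneg).unique ⟨⟨ah, hahn, hahs, ?_⟩, ?_⟩
    · rw [hfull, hahi0, hahi1]; ring
    · rintro w ⟨a, ha, hs, rfl⟩
      rw [hfull]
      exact pair_ub hn U hUmono hUconc a ha hs
  -- erased sums
  have herase : ∀ (i : Fin n) (a : Fin n → ℝ),
      ∑ j ∈ Finset.univ.erase i, e j * U (a j)
        = (U (a i0) + U (a i1)) - e i * U (a i) := by
    intro i a
    rw [Finset.sum_erase_eq_sub (Finset.mem_univ i), hfull]
  -- σm values at e
  have hσme : ∀ i : Fin n, σm i e = if (i:ℕ) < 2 then U 1 else 2 * U (1/2) := by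
    intro i
    have hbd : ∀ a : Fin n → ℝ, (∀ j, 0 ≤ a j) → a i0 ∈ Set.Icc (0:ℝ) 1 ∧ a i1 ∈ Set.Icc (0:ℝ) 1 → True := fun _ _ _ => trivial
    have hone : (1:ℝ) ∈ Set.Icc (0:ℝ) 1 := by norm_num
    have hAle : ∀ (a : Fin n → ℝ), (∀ j, 0 ≤ a j) → (∑ j, a j) ≤ 1 → ∀ j, a j ∈ Set.Icc (0:ℝ) 1 := by
      intro a ha hs j
      refine ⟨ha j, le_trans ?_ hs⟩
      exact Finset.single_le_sum (fun k _ => ha k) (Finset.mem_univ j)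
    rcases Nat.lt_or_ge (i:ℕ) 2 with h2 | h2
    · -- i is i0 or i1
      have hii : i = i0 ∨ i = i1 := by
        have : (i:ℕ) = 0 ∨ (i:ℕ) = 1 := by omega
        rcases this with h | h
        · left; exact Fin.ext (by simp [hi0, h])
        · right; exact Fin.ext (by simp [hi1, h])
      simp only [h2, if_true]
      -- the other index
      obtain ⟨k, hk, hik⟩ : ∃ k : Fin n, (k = i0 ∨ k = i1) ∧ k ≠ i := by
        rcases hii with h | h
        · exact ⟨i1, Or.inr rfl, by rw [h]; exact hne.symm⟩
        · exact ⟨i0, Or.inl rfl, by rw [h]; exact hne⟩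
      refine (hσm i e henneg).unique ⟨⟨fun j => if j = k then 1 else 0, ?_, ?_, ?_⟩, ?_⟩
      · intro j; dsimp only; split <;> norm_num
      · rw [Finset.sum_ite_eq' Finset.univ k (fun _ => (1:ℝ))]
        simp
      · rw [herase]
        rcases hii with h | h <;> rcases hk with hk | hk <;>
          simp_all [hne, hne.symm, hU0]
      · rintro w ⟨a, ha, hs, rfl⟩
        rw [herase]
        have h0 := hAle a ha hs i0
        have h1 := hAle a ha hs i1
        rcases hii with h | h
        · rw [h, hei0]
          have : U (a i1) ≤ U 1 := hUmono.monotoneOn h1 hone h1.2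
          linarith
        · rw [h, hei1]
          have : U (a i0) ≤ U 1 := hUmono.monotoneOn h0 hone h0.2
          linarith
    · -- i ≥ 2 : e i = 0
      have hei : e i = 0 := by simp [he]; omega
      have h2' : ¬ ((i:ℕ) < 2) := by omega
      simp only [h2', if_false]
      refine (hσm i e henneg).unique ⟨⟨ah, hahn, hahs, ?_⟩, ?_⟩
      · rw [herase, hei, hahi0, hahi1]; ring
      · rintro w ⟨a, ha, hs, rfl⟩
        rw [herase, hei]
        have := pair_ub hn U hUmono hUconc a ha hs
        linarith
  -- value of pS e
  have hsum : ∑ i, σm i e = 2 * (U 1 - 2 * U (1/2)) + (n:ℝ) * (2 * U (1/2)) := by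
    have hsplit : ∀ i : Fin n, σm i e
        = (if (i:ℕ) < 2 then U 1 - 2 * U (1/2) else 0) + 2 * U (1/2) := by
      intro i; rw [hσme i]; split <;> ring
    calc ∑ i, σm i e
        = ∑ i : Fin n, ((if (i:ℕ) < 2 then U 1 - 2 * U (1/2) else 0) + 2 * U (1/2)) := by
          exact Finset.sum_congr rfl (fun i _ => hsplit i)
      _ = ∑ i : Fin n, (if (i:ℕ) < 2 then U 1 - 2 * U (1/2) else 0)
            + ∑ _i : Fin n, 2 * U (1/2) := Finset.sum_add_distrib
      _ = 2 * (U 1 - 2 * U (1/2)) + (n:ℝ) * (2 * U (1/2)) := by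
          rw [sum_if_two hn (fun _ => U 1 - 2 * U (1/2)), Finset.sum_const,
            Finset.card_univ, Fintype.card_fin, nsmul_eq_mul]
          ring
  have hval : pS e = 2 * U 1 - 2 * U (1/2) := by
    rw [hpS e, hsum, hσSe]; ring
  have hpos : 0 < pS e := by
    have h12 : U (1/2) < U 1 :=
      hUmono (by norm_num) (by norm_num) (by norm_num)
    rw [hval]; linarith
  refine ⟨⟨hval, hpos⟩, ?_⟩
  intro θ hθ hord h0 h1
  apply hpSmono e θ henneg
  intro i
  by_cases h : (i:ℕ) < 2
  · have hii : i = i0 ∨ i = i1 := by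
      have hv : (i:ℕ) = 0 ∨ (i:ℕ) = 1 := by omega
      rcases hv with h' | h'
      · left; exact Fin.ext (by simp [hi0, h'])
      · right; exact Fin.ext (by simp [hi1, h'])
    have : θ i = 1 := by rcases hii with h' | h' <;> rw [h'] <;> assumption
    simp only [he, h, this, if_true] <;> norm_num
  · have : e i = 0 := by simp only [he, h, if_false] <;> norm_num
    rw [this]; exact hθ i
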